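/- Let v₁ = Σ_{i≥0} i!·xⁱ ∈ ℚ[[x]]. Then v₁ is not algebraic over ℚ(x); in particular v₁ does not lie in the fraction field of ℚ[x]. -/

import Mathlib

open Polynomial

private lemma aux_int_mul_eq (N : ℕ) (c : ℚ) (h : c.den ∣ N) :
    (((N / c.den : ℕ) * c.num : ℤ) : ℚ) = (N : ℚ) * c := by
  obtain ⟨t, ht⟩ := h
  have h1 : N / c.den = t := by rw [ht]; exact Nat.mul_div_cancel_left t c.pos
  have h2 : (c.den : ℚ) * c = c.num := by
    have hd : (c.den : ℚ) ≠ 0 := by exact_mod_cast c.den_ne_zero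
    nth_rewrite 2 [← Rat.num_div_den c]
    rw [mul_comm, div_mul_cancel₀ _ hd]
  rw [h1, ht]
  push_cast
  rw [mul_comm (c.den : ℚ) (t : ℚ), mul_assoc, h2]

private lemma aux_clear (P : Polynomial (Polynomial ℚ)) :
    ∃ (N : ℕ) (Q : Polynomial (Polynomial ℤ)), 0 < N ∧
      Q.map (mapRingHom (Int.castRingHom ℚ)) = C (C (N : ℚ)) * P := by
  classical
  set N : ℕ := ∏ j ∈ P.support, ∏ k ∈ (P.coeff j).support, ((P.coeff j).coeff k).den with hN
  have hNpos : 0 < N := Finset.prod_pos fun j _ => Finset.prod_pos fun k _ => Rat.pos _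
  have hdvd : ∀ j k, ((P.coeff j).coeff k).den ∣ N := by
    intro j k
    by_cases hj : j ∈ P.support
    · by_cases hk : k ∈ (P.coeff j).support
      · have h1 : ((P.coeff j).coeff k).den ∣
            ∏ k ∈ (P.coeff j).support, ((P.coeff j).coeff k).den :=
          Finset.dvd_prod_of_mem _ hk
        have h2 : (∏ k ∈ (P.coeff j).support, ((P.coeff j).coeff k).den) ∣ N :=
          Finset.dvd_prod_of_mem
            (fun j => ∏ k ∈ (P.coeff j).support, ((P.coeff j).coeff k).den) hj
        exact h1.trans h2
      · simp [Polynomial.notMem_support_iff.mp hk]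
    · simp [Polynomial.notMem_support_iff.mp hj]
  refine ⟨N, ∑ j ∈ P.support, monomial j (∑ k ∈ (P.coeff j).support,
      monomial k ((N / ((P.coeff j).coeff k).den : ℕ) * ((P.coeff j).coeff k).num)), hNpos, ?_⟩
  ext j k
  rw [coeff_map, coeff_C_mul]
  rw [finset_sum_coeff]
  simp only [coeff_monomial]
  rw [Finset.sum_ite_eq' P.support j (fun j' => (∑ k ∈ (P.coeff j').support,
      monomial k ((N / ((P.coeff j').coeff k).den : ℕ) * ((P.coeff j').coeff k).num)))]
  by_cases hj : j ∈ P.support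
  · rw [if_pos hj]
    rw [coe_mapRingHom, coeff_map, finset_sum_coeff]
    simp only [coeff_monomial]
    rw [Finset.sum_ite_eq' (P.coeff j).support k]
    by_cases hk : k ∈ (P.coeff j).support
    · rw [if_pos hk]
      rw [coeff_C_mul, ← aux_int_mul_eq N ((P.coeff j).coeff k) (hdvd j k)]
      simp
    · rw [if_neg hk, coeff_C_mul, Polynomial.notMem_support_iff.mp hk]
      simp
  · rw [if_neg hj, Polynomial.notMem_support_iff.mp hj]
    simp

private lemma aux_int (Q : Polynomial (Polynomial ℤ)) (hQ : Q ≠ 0)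
    (hE : Polynomial.eval₂ (Polynomial.coeToPowerSeries.ringHom)
      (PowerSeries.mk fun i => (i.factorial : ℤ)) Q = 0) : False := by
  classical
  set a : ℤ := Q.leadingCoeff.leadingCoeff with ha_def
  have hlc : Q.leadingCoeff ≠ 0 := leadingCoeff_ne_zero.mpr hQ
  have ha : a ≠ 0 := leadingCoeff_ne_zero.mpr hlc
  set D : ℕ := Q.support.sup fun j => (Q.coeff j).natDegree with hD_def
  have hD : ∀ j, (Q.coeff j).natDegree ≤ D := by
    intro j
    by_cases hj : j ∈ Q.support
    · exact Finset.le_sup (f := fun j => (Q.coeff j).natDegree) hj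
    · simp [Polynomial.notMem_support_iff.mp hj]
  obtain ⟨p, hple, hp⟩ := Nat.exists_infinite_primes (max (D + 2) (a.natAbs + 1))
  haveI : Fact p.Prime := ⟨hp⟩
  have hpD : D + 2 ≤ p := le_trans (le_max_left _ _) hple
  have hpa : a.natAbs < p := lt_of_lt_of_le (Nat.lt_succ_self _) (le_trans (le_max_right _ _) hple)
  -- the mod-p reduction of the factorial series is a polynomial
  set F : Polynomial (ZMod p) := ∑ i ∈ Finset.range p, monomial i ((i.factorial : ZMod p))
    with hF_def
  have hFcoeff : ∀ n, F.coeff n = if n < p then ((n.factorial : ZMod p)) else 0 := by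
    intro n
    rw [hF_def, finset_sum_coeff]
    simp only [coeff_monomial]
    rw [Finset.sum_ite_eq' (Finset.range p) n (fun i => ((i.factorial : ZMod p)))]
    simp [Finset.mem_range]
  have hFp : ∀ n, p ≤ n → ((n.factorial : ZMod p)) = 0 := by
    intro n hn
    rw [ZMod.natCast_eq_zero_iff]
    exact Nat.dvd_factorial hp.pos hn
  -- reduce the relation mod p
  have hπ : (PowerSeries.map (Int.castRingHom (ZMod p)))
      (Polynomial.eval₂ (Polynomial.coeToPowerSeries.ringHom)
        (PowerSeries.mk fun i => (i.factorial : ℤ)) Q) = 0 := by rw [hE]; simp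
  rw [Polynomial.hom_eval₂] at hπ
  have hcomp : (PowerSeries.map (Int.castRingHom (ZMod p))).comp
        (Polynomial.coeToPowerSeries.ringHom (R := ℤ)) =
      (Polynomial.coeToPowerSeries.ringHom (R := ZMod p)).comp
        (mapRingHom (Int.castRingHom (ZMod p))) := by
    apply RingHom.ext; intro q
    apply PowerSeries.ext; intro n
    simp [Polynomial.coeff_coe]
  have hv : (PowerSeries.map (Int.castRingHom (ZMod p)))
      (PowerSeries.mk fun i => (i.factorial : ℤ)) = (F : PowerSeries (ZMod p)) := by
    apply PowerSeries.ext; intro n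
    rw [PowerSeries.coeff_map, Polynomial.coeff_coe, hFcoeff n, PowerSeries.coeff_mk]
    by_cases hn : n < p
    · simp [hn]
    · rw [if_neg hn]
      simpa using hFp n (le_of_not_gt hn)
  rw [hcomp, hv, ← Polynomial.eval₂_map] at hπ
  set Q' : Polynomial (Polynomial (ZMod p)) := Q.map (mapRingHom (Int.castRingHom (ZMod p)))
    with hQ'_def
  have heval : Q'.eval F = 0 := by
    have h2 : ((Q'.eval F : Polynomial (ZMod p)) : PowerSeries (ZMod p)) = 0 := by
      rw [← hπ, ← Polynomial.coeToPowerSeries.ringHom_apply, Polynomial.eval,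
        Polynomial.hom_eval₂, RingHom.comp_id, Polynomial.coeToPowerSeries.ringHom_apply]
    exact Polynomial.coe_eq_zero_iff.mp h2
  -- Q' is nonzero because p does not divide the top integer coefficient a
  have hQ' : Q' ≠ 0 := by
    intro h0
    have h1 : (Q.leadingCoeff).map (Int.castRingHom (ZMod p)) = 0 := by
      have := congrArg (fun R => Polynomial.coeff R Q.natDegree) h0
      simpa [hQ'_def, Polynomial.coeff_map, Polynomial.coeff_natDegree] using this
    have h2 : ((a : ZMod p)) = 0 := by
      have := congrArg (fun R => Polynomial.coeff R Q.leadingCoeff.natDegree) h1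
      simpa [Polynomial.coeff_map, ha_def, Polynomial.coeff_natDegree] using this
    rw [ZMod.intCast_zmod_eq_zero_iff_dvd] at h2
    have h3 : p ∣ a.natAbs := by
      have := Int.natAbs_dvd_natAbs.mpr h2
      simpa using this
    have h4 : p ≤ a.natAbs := Nat.le_of_dvd (Int.natAbs_pos.mpr ha) h3
    omega
  have hD' : ∀ j, (Q'.coeff j).natDegree ≤ D := by
    intro j
    rw [hQ'_def, Polynomial.coeff_map]
    exact le_trans Polynomial.natDegree_map_le (hD j)
  -- facts about F
  have hF0 : F.coeff (p - 1) ≠ 0 := by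
    rw [hFcoeff, if_pos (by omega)]
    rw [ZMod.wilsons_lemma]
    exact neg_ne_zero.mpr one_ne_zero
  have hFne : F ≠ 0 := fun h => hF0 (by rw [h]; simp)
  have hFdeg : F.natDegree = p - 1 := by
    refine le_antisymm ?_ (Polynomial.le_natDegree_of_ne_zero hF0)
    apply Polynomial.natDegree_le_iff_coeff_eq_zero.mpr
    intro m hm
    rw [hFcoeff, if_neg (by omega)]
  -- degree contradiction
  set d : ℕ := Q'.natDegree with hd_def
  have hcd : Q'.coeff d ≠ 0 := by
    rw [hd_def, Polynomial.coeff_natDegree]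
    exact Polynomial.leadingCoeff_ne_zero.mpr hQ'
  by_cases hd0 : d = 0
  · have h5 := heval
    rw [Polynomial.eq_C_of_natDegree_eq_zero hd0, Polynomial.eval_C] at h5
    exact hcd (by rw [hd0]; exact h5)
  · have hsum : (∑ j ∈ Finset.range d, Q'.coeff j * F ^ j) + Q'.coeff d * F ^ d = 0 := by
      rw [← Finset.sum_range_succ, ← Polynomial.eval_eq_sum_range, heval]
    set S : Polynomial (ZMod p) := ∑ j ∈ Finset.range d, Q'.coeff j * F ^ j with hS_def
    have hbig_ne : Q'.coeff d * F ^ d ≠ 0 := mul_ne_zero hcd (pow_ne_zero _ hFne)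
    have hbigdeg : (Q'.coeff d * F ^ d).degree
        = (((Q'.coeff d).natDegree + d * (p - 1) : ℕ) : WithBot ℕ) := by
      rw [Polynomial.degree_eq_natDegree hbig_ne,
        Polynomial.natDegree_mul hcd (pow_ne_zero _ hFne), Polynomial.natDegree_pow, hFdeg]
    have hdegS : S.degree < (Q'.coeff d * F ^ d).degree := by
      apply lt_of_le_of_lt (Polynomial.degree_sum_le _ _)
      rw [Finset.sup_lt_iff]
      · intro j hj
        rw [Finset.mem_range] at hj
        have e1 : (Q'.coeff j * F ^ j).degree ≤ ((D + j * (p - 1) : ℕ) : WithBot ℕ) := by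
          apply le_trans (Polynomial.degree_mul_le _ _)
          rw [Nat.cast_add]
          apply add_le_add
          · exact le_trans Polynomial.degree_le_natDegree (by exact_mod_cast hD' j)
          · rw [Polynomial.degree_eq_natDegree (pow_ne_zero j hFne),
              Polynomial.natDegree_pow, hFdeg]
        refine lt_of_le_of_lt e1 ?_
        rw [hbigdeg]
        have h5 : D + 1 ≤ p - 1 := by omega
        have h6 : j + 1 ≤ d := hj
        have h7 : (j + 1) * (p - 1) ≤ d * (p - 1) := Nat.mul_le_mul_right _ h6
        have h8 : (j + 1) * (p - 1) = j * (p - 1) + (p - 1) := by ring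
        have h9 : D + j * (p - 1) < (Q'.coeff d).natDegree + d * (p - 1) := by omega
        exact_mod_cast h9
      · rw [bot_lt_iff_ne_bot]
        simp only [ne_eq, Polynomial.degree_eq_bot]
        exact hbig_ne
    have hneg : Q'.coeff d * F ^ d = -S := eq_neg_of_add_eq_zero_right hsum
    rw [hneg, Polynomial.degree_neg] at hdegS
    exact lt_irrefl _ hdegS

private lemma aux_main :
    ¬ IsAlgebraic (Polynomial ℚ)
      (PowerSeries.mk fun i => (i.factorial : ℚ) : PowerSeries ℚ) := by
  rintro ⟨P, hP0, hPv⟩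
  obtain ⟨N, Q, hN, hmap⟩ := aux_clear P
  have hQ0 : Q ≠ 0 := by
    intro h0
    rw [h0, Polynomial.map_zero] at hmap
    have hC : (C (C (N : ℚ)) : Polynomial (Polynomial ℚ)) ≠ 0 := by
      simp only [ne_eq, Polynomial.C_eq_zero]
      exact_mod_cast hN.ne'
    exact hP0 ((mul_eq_zero.mp hmap.symm).resolve_left hC)
  have h1 : Polynomial.eval₂ (algebraMap (Polynomial ℚ) (PowerSeries ℚ))
      (PowerSeries.mk fun i => (i.factorial : ℚ))
      (Q.map (mapRingHom (Int.castRingHom ℚ))) = 0 := by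
    rw [hmap, Polynomial.eval₂_mul, Polynomial.eval₂_C, ← Polynomial.aeval_def, hPv, mul_zero]
  rw [Polynomial.eval₂_map] at h1
  have hcomp : (algebraMap (Polynomial ℚ) (PowerSeries ℚ)).comp
        (mapRingHom (Int.castRingHom ℚ)) =
      (PowerSeries.map (Int.castRingHom ℚ)).comp
        (Polynomial.coeToPowerSeries.ringHom (R := ℤ)) := by
    apply RingHom.ext; intro q
    apply PowerSeries.ext; intro n
    simp [PowerSeries.algebraMap_apply', Polynomial.coeff_coe]
  have hv' : (PowerSeries.mk fun i => (i.factorial : ℚ)) =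
      (PowerSeries.map (Int.castRingHom ℚ)) (PowerSeries.mk fun i => (i.factorial : ℤ)) := by
    apply PowerSeries.ext; intro n
    simp
  rw [hcomp, hv', ← Polynomial.hom_eval₂] at h1
  have hinj : Function.Injective
      (PowerSeries.map (Int.castRingHom ℚ) : PowerSeries ℤ → PowerSeries ℚ) := by
    intro x y h
    apply PowerSeries.ext; intro n
    have := congrArg (PowerSeries.coeff n) h
    simp only [PowerSeries.coeff_map, eq_intCast, Int.cast_inj] at this
    exact this
  exact aux_int Q hQ0 (hinj (by rw [map_zero]; exact h1))

/-- The power series `v₁ = Σ i!·xⁱ` is transcendental over `ℚ(x)`: it is not algebraic over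
the polynomial ring `ℚ[x]` (equivalently over its fraction field `ℚ(x)`); in particular it
is not a ratio of two polynomials. -/
theorem factorial_series_transcendental :
    let v₁ : PowerSeries ℚ := PowerSeries.mk fun i => (Nat.factorial i : ℚ)
    Transcendental (Polynomial ℚ) v₁ ∧
      ∀ p q : Polynomial ℚ, q ≠ 0 →
        algebraMap (Polynomial ℚ) (PowerSeries ℚ) q * v₁ ≠
          algebraMap (Polynomial ℚ) (PowerSeries ℚ) p := by
  intro v₁
  refine ⟨aux_main, ?_⟩
  intro p q hq heq
  apply aux_main
  refine ⟨C q * X - C p, ?_, ?_⟩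
  · intro h0
    apply hq
    have := congrArg (fun r => Polynomial.coeff r 1) h0
    simpa using this
  · rw [map_sub, map_mul, Polynomial.aeval_C, Polynomial.aeval_X, Polynomial.aeval_C,
      sub_eq_zero]
    exact heq
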